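/- Classification of centers of lattice-preserving rotations of order 3: if ρ is a rotation of the plane by 120° whose center c satisfies ρ(L) = L, where L is the vertex set of the triangular lattice, then c is either a lattice vertex or the centroid of a face of the lattice. -/

import Mathlib

/-- The sixth root of unity `ω = e^{iπ/3}` generating the triangular lattice. -/
noncomputable def omg : ℂ := Complex.exp ((Real.pi : ℂ) * Complex.I / 3)

/-- The vertex set of the triangular lattice drawing `G_D`: the Eisenstein integers. -/
def TriLattice : Set ℂ := {z | ∃ a b : ℤ, z = (a : ℂ) + (b : ℂ) * omg}

lemma omg_val : omg = ((1/2 : ℝ) : ℂ) + ((Real.sqrt 3 / 2 : ℝ) : ℂ) * Complex.I := by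
  rw [omg, show (Real.pi : ℂ) * Complex.I / 3 = ((Real.pi / 3 : ℝ) : ℂ) * Complex.I by
    push_cast; ring, Complex.exp_mul_I, ← Complex.ofReal_cos, ← Complex.ofReal_sin]
  rw [Real.cos_pi_div_three, Real.sin_pi_div_three]

lemma omg_sq : omg ^ 2 = omg - 1 := by
  have h3 : ((Real.sqrt 3 : ℝ) : ℂ) ^ 2 = 3 := by
    norm_cast
    rw [Real.sq_sqrt] ; norm_num
  rw [omg_val]
  push_cast
  linear_combination h3 * (Complex.I ^ 2 / 4) + Complex.I_sq * (3 / 4)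

lemma abs_omg : ‖omg‖ = 1 := by
  rw [omg, Complex.norm_exp]
  norm_num [Complex.div_re, Complex.mul_re, Complex.normSq]

lemma abs_one_sub_omg : ‖1 - omg‖ = 1 := by
  have : (1 : ℂ) - omg = ((1/2 : ℝ) : ℂ) + ((-(Real.sqrt 3 / 2) : ℝ) : ℂ) * Complex.I := by
    rw [omg_val]; push_cast; ring
  rw [this, Complex.norm_add_mul_I]
  rw [show (1/2 : ℝ)^2 + (-(Real.sqrt 3 / 2))^2 = 1/4 + (Real.sqrt 3)^2/4 by ring,
    Real.sq_sqrt (by norm_num : (0:ℝ) ≤ 3)]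
  norm_num

/-- classification of centers of lattice-preserving rotations of order 3:
the center is a lattice vertex or a face centroid. -/
theorem order_three_center_classification (c : ℂ)
    (h : (fun p => c + Complex.exp (2 * (Real.pi : ℂ) * Complex.I / 3) * (p - c)) '' TriLattice
        = TriLattice) :
    c ∈ TriLattice ∨
      (∃ u v w : ℂ, u ∈ TriLattice ∧ v ∈ TriLattice ∧ w ∈ TriLattice ∧
        ‖u - v‖ = 1 ∧ ‖v - w‖ = 1 ∧ ‖u - w‖ = 1 ∧
        c = (u + v + w) / 3) := by
  have h0 : (0 : ℂ) ∈ TriLattice := ⟨0, 0, by simp⟩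
  have himg : c + Complex.exp (2 * (Real.pi : ℂ) * Complex.I / 3) * (0 - c) ∈ TriLattice := by
    rw [← h]; exact ⟨0, h0, rfl⟩
  have hz : Complex.exp (2 * (Real.pi : ℂ) * Complex.I / 3) = omg ^ 2 := by
    rw [omg, sq, ← Complex.exp_add]; ring_nf
  obtain ⟨a, b, hab⟩ := himg
  rw [hz] at hab
  have hsq := omg_sq
  have key : 3 * c = ((a : ℂ) - b) + ((a : ℂ) + 2 * b) * omg := by
    linear_combination (1 + omg) * hab + (2 * c + (b : ℂ) + c * omg) * hsq
  set m : ℤ := a - b with hm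
  set n : ℤ := a + 2 * b with hn
  have keym : 3 * c = (m : ℂ) + (n : ℂ) * omg := by push_cast [hm, hn]; exact key
  have hmod : m % 3 = 0 ∨ m % 3 = 1 ∨ m % 3 = 2 := by omega
  rcases hmod with h0' | h1' | h2'
  · -- lattice vertex
    left
    refine ⟨m / 3, n / 3, ?_⟩
    have hk : m = 3 * (m / 3) := by omega
    have hl : n = 3 * (n / 3) := by omega
    have hkC : (m : ℂ) = 3 * ((m / 3 : ℤ) : ℂ) := by exact_mod_cast hk
    have hlC : (n : ℂ) = 3 * ((n / 3 : ℤ) : ℂ) := by exact_mod_cast hl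
    linear_combination keym / 3 + hkC / 3 + hlC / 3 * omg
  · -- centroid, residue 1
    right
    set k : ℤ := m / 3
    set l : ℤ := n / 3
    have hk : m = 3 * k + 1 := by omega
    have hl : n = 3 * l + 1 := by omega
    have hkC : (m : ℂ) = 3 * (k : ℂ) + 1 := by exact_mod_cast hk
    have hlC : (n : ℂ) = 3 * (l : ℂ) + 1 := by exact_mod_cast hl
    refine ⟨(k : ℂ) + (l : ℂ) * omg, (k : ℂ) + (l : ℂ) * omg + 1, (k : ℂ) + (l : ℂ) * omg + omg,
      ⟨k, l, rfl⟩, ⟨k + 1, l, by push_cast; ring⟩, ⟨k, l + 1, by push_cast; ring⟩, ?_, ?_, ?_, ?_⟩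
    · simp
    · rw [show (k : ℂ) + (l : ℂ) * omg + 1 - ((k : ℂ) + (l : ℂ) * omg + omg) = 1 - omg by ring]
      exact abs_one_sub_omg
    · rw [show (k : ℂ) + (l : ℂ) * omg - ((k : ℂ) + (l : ℂ) * omg + omg) = -omg by ring,
        norm_neg]
      exact abs_omg
    · linear_combination keym / 3 + hkC / 3 + hlC / 3 * omg
  · -- centroid, residue 2
    right
    set k : ℤ := m / 3
    set l : ℤ := n / 3
    have hk : m = 3 * k + 2 := by omega
    have hl : n = 3 * l + 2 := by omega
    have hkC : (m : ℂ) = 3 * (k : ℂ) + 2 := by exact_mod_cast hk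
    have hlC : (n : ℂ) = 3 * (l : ℂ) + 2 := by exact_mod_cast hl
    refine ⟨(k : ℂ) + (l : ℂ) * omg + 1, (k : ℂ) + (l : ℂ) * omg + omg,
      (k : ℂ) + (l : ℂ) * omg + 1 + omg,
      ⟨k + 1, l, by push_cast; ring⟩, ⟨k, l + 1, by push_cast; ring⟩,
      ⟨k + 1, l + 1, by push_cast; ring⟩, ?_, ?_, ?_, ?_⟩
    · rw [show (k : ℂ) + (l : ℂ) * omg + 1 - ((k : ℂ) + (l : ℂ) * omg + omg) = 1 - omg by ring]
      exact abs_one_sub_omg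
    · rw [show (k : ℂ) + (l : ℂ) * omg + omg - ((k : ℂ) + (l : ℂ) * omg + 1 + omg) = -1 by ring]
      simp
    · rw [show (k : ℂ) + (l : ℂ) * omg + 1 - ((k : ℂ) + (l : ℂ) * omg + 1 + omg) = -omg by ring,
        norm_neg]
      exact abs_omg
    · linear_combination keym / 3 + hkC / 3 + hlC / 3 * omg
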